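/- Let f₁ and f₂ be bivariate exponential polynomials, each with at most N terms, pairwise distinct frequencies in [0,1)², and nonzero polynomial coefficients of degree < D, and suppose f₁ ≠ f₂ as functions on ℝ² but f₁(m, n) = f₂(m, n) for all (m, n) ∈ A_{2N}(D). Let X be the union of the projections of the frequency sets of f₁ and f₂ onto the first coordinate. Then there are infinitely many distinct functions f : ℝ² → ℂ that are bivariate exponential polynomials with at most 2N terms, pairwise distinct frequencies in [0,1)² whose first coordinates all lie in X, polynomial coefficients of degree < D, and that satisfy f(m, n) = f₁(m, n) for all (m, n) ∈ A_{2N}(D). -/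

import Mathlib

/-- The sampling set `A_N(D) = ⋃_{r=1}^{N} [2⌊N/r⌋D]₀ × [2rD]₀ ⊆ ℤ²`
(represented as a finite set of pairs of natural numbers). -/
def sampSet (N D : ℕ) : Finset (ℕ × ℕ) :=
  (Finset.Icc 1 N).biUnion fun r =>
    Finset.range (2 * (N / r) * D + 1) ×ˢ Finset.range (2 * r * D + 1)

/-- `f : ℝ² → ℂ` is a bivariate exponential polynomial with at most `N` terms, (pairwise
distinct) frequencies given by the finite set `V ⊆ [0,1)²`, and nonzero polynomial coefficients
in which every variable appears with exponent `< D`: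
`f(ξ,η) = ∑_{(x,y) ∈ V} p_{(x,y)}(ξ,η) e^{2πi (xξ + yη)}`. -/
def IsExpPoly2 (N D : ℕ) (f : ℝ → ℝ → ℂ) (V : Finset (ℝ × ℝ)) : Prop :=
  ∃ p : ℝ × ℝ → MvPolynomial (Fin 2) ℂ,
    V.card ≤ N ∧
    (∀ v ∈ V, v.1 ∈ Set.Ico (0 : ℝ) 1 ∧ v.2 ∈ Set.Ico (0 : ℝ) 1) ∧
    (∀ v ∈ V, p v ≠ 0) ∧
    (∀ v ∈ V, ∀ i : Fin 2, (p v).degreeOf i < D) ∧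
    ∀ ξ η : ℝ, f ξ η = ∑ v ∈ V, MvPolynomial.eval ![(ξ : ℂ), (η : ℂ)] (p v) *
      Complex.exp (2 * Real.pi * Complex.I * (v.1 * ξ + v.2 * η))


/-- If two *different* bivariate exponential polynomials, each with at most
`N` terms, pairwise distinct frequencies in `[0,1)²` and nonzero coefficients of degree `< D`,
agree on the sampling set `A_{2N}(D)`, then there are infinitely many distinct bivariate
exponential polynomials with at most `2N` terms, frequencies in `[0,1)²` whose first
coordinates lie in the union `X` of the projections of the two frequency sets, and
coefficients of degree `< D`, all agreeing with `f₁` on `A_{2N}(D)`. -/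
theorem exp_poly_infinitely_many_from_two (N D : ℕ) (hN : 0 < N) (hD : 0 < D)
    (f₁ f₂ : ℝ → ℝ → ℂ) (V₁ V₂ : Finset (ℝ × ℝ))
    (h₁ : IsExpPoly2 N D f₁ V₁) (h₂ : IsExpPoly2 N D f₂ V₂)
    (hne : f₁ ≠ f₂)
    (hsamp : ∀ mn ∈ sampSet (2 * N) D, f₁ (mn.1 : ℝ) (mn.2 : ℝ) = f₂ (mn.1 : ℝ) (mn.2 : ℝ)) :
    {f : ℝ → ℝ → ℂ | ∃ V : Finset (ℝ × ℝ), IsExpPoly2 (2 * N) D f V ∧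
      (∀ v ∈ V, v.1 ∈ Prod.fst '' (V₁ : Set (ℝ × ℝ)) ∪ Prod.fst '' (V₂ : Set (ℝ × ℝ))) ∧
      ∀ mn ∈ sampSet (2 * N) D,
        f (mn.1 : ℝ) (mn.2 : ℝ) = f₁ (mn.1 : ℝ) (mn.2 : ℝ)}.Infinite := by

  obtain ⟨p₁, hc₁, hI₁, hnz₁, hd₁, he₁⟩ := h₁
  obtain ⟨p₂, hc₂, hI₂, hnz₂, hd₂, he₂⟩ := h₂
  set a : ℝ × ℝ → MvPolynomial (Fin 2) ℂ := fun v => if v ∈ V₁ then p₁ v else 0 with ha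
  set b : ℝ × ℝ → MvPolynomial (Fin 2) ℂ := fun v => if v ∈ V₂ then p₂ v else 0 with hb
  -- the family of functions
  set g : ℝ → ℝ → ℝ → ℂ := fun t ξ η => f₁ ξ η + (t : ℂ) * (f₂ ξ η - f₁ ξ η) with hg
  apply Set.infinite_of_injective_forall_mem (f := g)
  · -- injectivity
    intro s t hst
    obtain ⟨ξ, hξ⟩ : ∃ ξ, f₁ ξ ≠ f₂ ξ := Function.ne_iff.mp hne
    obtain ⟨η, hη⟩ : ∃ η, f₁ ξ η ≠ f₂ ξ η := Function.ne_iff.mp hξ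
    have := congrFun (congrFun hst ξ) η
    simp only [hg] at this
    have hd : f₂ ξ η - f₁ ξ η ≠ 0 := sub_ne_zero.mpr (Ne.symm hη)
    have : (s : ℂ) = t := by
      rw [add_right_inj, mul_eq_mul_right_iff] at this
      rcases this with h | h
      · exact_mod_cast h
      · exact absurd h hd
    exact_mod_cast this
  · intro t
    set q : ℝ × ℝ → MvPolynomial (Fin 2) ℂ :=
      fun v => MvPolynomial.C (1 - (t : ℂ)) * a v + MvPolynomial.C (t : ℂ) * b v with hq
    refine ⟨(V₁ ∪ V₂).filter (fun v => q v ≠ 0), ⟨q, ?_, ?_, ?_, ?_, ?_⟩, ?_, ?_⟩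
    · calc ((V₁ ∪ V₂).filter (fun v => q v ≠ 0)).card ≤ (V₁ ∪ V₂).card :=
            Finset.card_filter_le _ _
        _ ≤ V₁.card + V₂.card := Finset.card_union_le _ _
        _ ≤ 2 * N := by omega
    · intro v hv
      rcases Finset.mem_union.mp (Finset.mem_filter.mp hv).1 with h | h
      · exact hI₁ v h
      · exact hI₂ v h
    · intro v hv; exact (Finset.mem_filter.mp hv).2
    · intro v hv i
      have h0 : (0 : MvPolynomial (Fin 2) ℂ).degreeOf i < D := by
        simpa using hD
      have hav : (a v).degreeOf i < D := by
        by_cases h : v ∈ V₁ <;> simp [ha, h, hd₁ v, h0, hD]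
      have hbv : (b v).degreeOf i < D := by
        by_cases h : v ∈ V₂ <;> simp [hb, h, hd₂ v, h0, hD]
      calc (q v).degreeOf i
          ≤ max ((MvPolynomial.C (1 - (t:ℂ)) * a v).degreeOf i)
              ((MvPolynomial.C (t:ℂ) * b v).degreeOf i) :=
            MvPolynomial.degreeOf_add_le _ _ _
        _ < D := by
            apply max_lt
            · exact lt_of_le_of_lt (MvPolynomial.degreeOf_C_mul_le _ _ _) hav
            · exact lt_of_le_of_lt (MvPolynomial.degreeOf_C_mul_le _ _ _) hbv
    · intro ξ η
      have hsub : ∑ v ∈ (V₁ ∪ V₂).filter (fun v => q v ≠ 0),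
            MvPolynomial.eval ![(ξ : ℂ), (η : ℂ)] (q v) *
              Complex.exp (2 * Real.pi * Complex.I * (v.1 * ξ + v.2 * η))
          = ∑ v ∈ V₁ ∪ V₂, MvPolynomial.eval ![(ξ : ℂ), (η : ℂ)] (q v) *
              Complex.exp (2 * Real.pi * Complex.I * (v.1 * ξ + v.2 * η)) := by
        apply Finset.sum_subset (Finset.filter_subset _ _)
        intro v hv hnv
        have : q v = 0 := by
          by_contra h
          exact hnv (Finset.mem_filter.mpr ⟨hv, h⟩)
        simp [this]
      have hA : ∑ v ∈ V₁ ∪ V₂, MvPolynomial.eval ![(ξ : ℂ), (η : ℂ)] (a v) *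
              Complex.exp (2 * Real.pi * Complex.I * (v.1 * ξ + v.2 * η)) = f₁ ξ η := by
        rw [he₁ ξ η]
        refine (Finset.sum_subset Finset.subset_union_left ?_).symm.trans
          (Finset.sum_congr rfl fun v hv => by simp [ha, hv])
        intro v _ hv; simp [ha, hv]
      have hB : ∑ v ∈ V₁ ∪ V₂, MvPolynomial.eval ![(ξ : ℂ), (η : ℂ)] (b v) *
              Complex.exp (2 * Real.pi * Complex.I * (v.1 * ξ + v.2 * η)) = f₂ ξ η := by
        rw [he₂ ξ η]
        refine (Finset.sum_subset Finset.subset_union_right ?_).symm.trans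
          (Finset.sum_congr rfl fun v hv => by simp [hb, hv])
        intro v _ hv; simp [hb, hv]
      rw [hsub]
      have : ∑ v ∈ V₁ ∪ V₂, MvPolynomial.eval ![(ξ : ℂ), (η : ℂ)] (q v) *
              Complex.exp (2 * Real.pi * Complex.I * (v.1 * ξ + v.2 * η))
          = (1 - (t:ℂ)) * (∑ v ∈ V₁ ∪ V₂, MvPolynomial.eval ![(ξ : ℂ), (η : ℂ)] (a v) *
              Complex.exp (2 * Real.pi * Complex.I * (v.1 * ξ + v.2 * η)))
            + (t:ℂ) * (∑ v ∈ V₁ ∪ V₂, MvPolynomial.eval ![(ξ : ℂ), (η : ℂ)] (b v) *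
              Complex.exp (2 * Real.pi * Complex.I * (v.1 * ξ + v.2 * η))) := by
        rw [Finset.mul_sum, Finset.mul_sum, ← Finset.sum_add_distrib]
        refine Finset.sum_congr rfl fun v _ => ?_
        simp [hq]; ring
      rw [this, hA, hB, hg]; ring
    · intro v hv
      rcases Finset.mem_union.mp (Finset.mem_filter.mp hv).1 with h | h
      · exact Or.inl ⟨v, h, rfl⟩
      · exact Or.inr ⟨v, h, rfl⟩
    · intro mn hmn
      simp only [hg, hsamp mn hmn]; ring
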